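/- Let g : ℝ → ℝ be integrable and bounded, with g(t) = 0 for t < 0, g(t) ≥ 0 for t ≥ 0, and ∫₀^∞ g(t) dt = k with 0 < k < 1. Let h be a nonnegative integrable function vanishing on (−∞,0) satisfying h(t) = g(t) + ∫₀ᵗ h(τ) g(t−τ) dτ for almost every t ≥ 0. Then h is essentially bounded and ess sup_{t≥0} h(t) ≤ (1/(1−k)) · sup_{t≥0} g(t). -/
import Mathlib


open MeasureTheory

/-- Causal convolution: `(u * v)(t) = ∫₀ᵗ u(τ) v(t-τ) dτ` for `t ≥ 0`, `0` for `t < 0`. -/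
noncomputable def cconv (u v : ℝ → ℝ) : ℝ → ℝ :=
  fun t => if t < 0 then 0 else ∫ τ in (0:ℝ)..t, u τ * v (t - τ)

/-- `convIter u n = u^{⊗(n+1)}`, the `(n+1)`-fold causal convolution of `u` with itself. -/
noncomputable def convIter (u : ℝ → ℝ) : ℕ → ℝ → ℝ
  | 0 => u
  | n + 1 => cconv (convIter u n) u

/-- sup-norm bound for the Volterra solution:
`ess sup_{t ≥ 0} h(t) ≤ (1/(1-k)) ⬝ sup_{t ≥ 0} g(t)`, stated as an a.e. pointwise bound
(which expresses both the essential boundedness of `h` and the bound itself). -/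
theorem volterra_solution_sup_bound (g h : ℝ → ℝ) (k : ℝ)
    (hg_int : Integrable g)
    (hg_bdd : ∃ M : ℝ, ∀ t : ℝ, |g t| ≤ M)
    (hg_neg : ∀ t < (0:ℝ), g t = 0)
    (hg_nonneg : ∀ t ≥ (0:ℝ), 0 ≤ g t)
    (hk : (∫ t in Set.Ioi (0:ℝ), g t) = k)
    (hk0 : 0 < k) (hk1 : k < 1)
    (hh_int : Integrable h)
    (hh_nonneg : ∀ t : ℝ, 0 ≤ h t)
    (hh_neg : ∀ t < (0:ℝ), h t = 0)
    (hh_eq : ∀ᵐ t : ℝ, 0 ≤ t → h t = g t + ∫ τ in (0:ℝ)..t, h τ * g (t - τ)) :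
    ∀ᵐ t : ℝ, 0 ≤ t → h t ≤ (1 / (1 - k)) * ⨆ s : Set.Ici (0:ℝ), g ↑s := by
  obtain ⟨M, hM⟩ := hg_bdd
  have hM0 : 0 ≤ M := le_trans (abs_nonneg _) (hM 0)
  set G : ℝ := ⨆ s : Set.Ici (0:ℝ), g ↑s with hGdef
  have hbdd : BddAbove (Set.range fun s : Set.Ici (0:ℝ) => g ↑s) := by
    refine ⟨M, ?_⟩
    rintro _ ⟨s, rfl⟩
    exact (le_abs_self _).trans (hM _)
  have hgG : ∀ t, 0 ≤ t → g t ≤ G := fun t ht => le_ciSup hbdd ⟨t, ht⟩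
  have hG0 : 0 ≤ G := le_trans (hg_nonneg 0 le_rfl) (hgG 0 le_rfl)
  -- measurability of τ ↦ g (t - τ)
  have hgc : ∀ t : ℝ, AEStronglyMeasurable (fun τ => g (t - τ)) volume := fun t =>
    hg_int.aestronglyMeasurable.comp_quasiMeasurePreserving
      (quasiMeasurePreserving_sub_left_of_right_invariant volume t)
  -- integrability of the convolution integrand
  have key_int : ∀ t : ℝ, IntervalIntegrable (fun τ => h τ * g (t - τ)) volume 0 t := by
    intro t
    rw [intervalIntegrable_iff]
    refine Integrable.mono' ((hh_int.restrict).const_mul M) ?_ ?_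
    · exact (hh_int.aestronglyMeasurable.mul (hgc t)).restrict
    · refine Filter.Eventually.of_forall fun τ => ?_
      have : ‖h τ * g (t - τ)‖ = h τ * |g (t - τ)| := by
        rw [Real.norm_eq_abs, abs_mul, abs_of_nonneg (hh_nonneg τ)]
      rw [this, mul_comm M (h τ)]
      exact mul_le_mul_of_nonneg_left (hM _) (hh_nonneg τ)
  -- ∫₀ᵗ g(t-τ) dτ ≤ k
  have hkt : ∀ t : ℝ, 0 ≤ t → (∫ τ in (0:ℝ)..t, g (t - τ)) ≤ k := by
    intro t ht
    have : (∫ τ in (0:ℝ)..t, g (t - τ)) = ∫ s in (0:ℝ)..t, g s := by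
      rw [intervalIntegral.integral_comp_sub_left g t]
      simp
    rw [this, intervalIntegral.integral_of_le ht, ← hk]
    refine setIntegral_mono_set hg_int.integrableOn ?_ ?_
    · filter_upwards [ae_restrict_mem measurableSet_Ioi] with x hx
      exact hg_nonneg x (le_of_lt hx)
    · exact Filter.Eventually.of_forall fun x hx => hx.1
  -- the set of a.e. bounds of h on [0, ∞)
  set S : Set ℝ := {b | ∀ᵐ t : ℝ, 0 ≤ t → h t ≤ b} with hSdef
  have hSne : S.Nonempty := by
    refine ⟨G + M * ∫ t, h t, ?_⟩
    filter_upwards [hh_eq] with t heq ht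
    rw [heq ht]
    have h1 : (∫ τ in (0:ℝ)..t, h τ * g (t - τ)) ≤ ∫ τ in (0:ℝ)..t, M * h τ := by
      refine intervalIntegral.integral_mono_on ht (key_int t)
        ((hh_int.intervalIntegrable).const_mul M) fun τ hτ => ?_
      rw [mul_comm M (h τ)]
      exact mul_le_mul_of_nonneg_left ((le_abs_self _).trans (hM _)) (hh_nonneg τ)
    have h2 : (∫ τ in (0:ℝ)..t, M * h τ) = M * ∫ τ in (0:ℝ)..t, h τ := by
      exact intervalIntegral.integral_const_mul M h
    have h3 : (∫ τ in (0:ℝ)..t, h τ) ≤ ∫ t, h t := by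
      rw [intervalIntegral.integral_of_le ht]
      exact setIntegral_le_integral hh_int (Filter.Eventually.of_forall hh_nonneg)
    have := h1.trans (h2.le.trans (mul_le_mul_of_nonneg_left h3 hM0))
    have := hgG t ht
    linarith
  have hSlb : ∀ b ∈ S, (0:ℝ) ≤ b := by
    intro b hb
    by_contra hlt
    push_neg at hlt
    have hsub : Set.Ici (0:ℝ) ⊆ {t : ℝ | ¬ (0 ≤ t → h t ≤ b)} := by
      intro t ht
      simp only [Set.mem_setOf_eq]
      intro hP
      exact absurd (le_trans (hh_nonneg t) (hP ht)) (not_le.mpr hlt)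
    have h0 : volume (Set.Ici (0:ℝ)) = 0 := measure_mono_null hsub hb
    simp [Real.volume_Ici] at h0
  have hSbdd : BddBelow S := ⟨0, hSlb⟩
  set B : ℝ := sInf S with hBdef
  have hB0 : 0 ≤ B := le_csInf hSne hSlb
  -- B is itself an a.e. bound
  obtain ⟨u, -, hulim, humem⟩ := exists_seq_tendsto_sInf hSne hSbdd
  have hBmem : ∀ᵐ t : ℝ, 0 ≤ t → h t ≤ B := by
    have hall : ∀ᵐ t : ℝ, ∀ n : ℕ, 0 ≤ t → h t ≤ u n := ae_all_iff.mpr fun n => humem n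
    filter_upwards [hall] with t ht h0
    exact ge_of_tendsto hulim (Filter.Eventually.of_forall fun n => ht n h0)
  -- fixed point inequality: G + k*B ∈ S
  have hstep : (G + k * B) ∈ S := by
    filter_upwards [hh_eq] with t heq ht
    rw [heq ht]
    have h1 : (∫ τ in (0:ℝ)..t, h τ * g (t - τ)) ≤ ∫ τ in (0:ℝ)..t, B * g (t - τ) := by
      refine intervalIntegral.integral_mono_ae_restrict ht (key_int t)
        ((((hg_int.intervalIntegrable (a := 0) (b := t)).comp_sub_left t).mono_set (by rw [sub_self, sub_zero, Set.uIcc_comm])).const_mul B) ?_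
      have hr1 : ∀ᵐ τ ∂(volume.restrict (Set.Icc (0:ℝ) t)), 0 ≤ τ → h τ ≤ B :=
        ae_restrict_of_ae hBmem
      have hr2 : ∀ᵐ τ ∂(volume.restrict (Set.Icc (0:ℝ) t)), τ ∈ Set.Icc (0:ℝ) t :=
        ae_restrict_mem measurableSet_Icc
      filter_upwards [hr1, hr2] with τ hbnd hmem
      exact mul_le_mul_of_nonneg_right (hbnd hmem.1) (hg_nonneg _ (by linarith [hmem.2]))
    have h2 : (∫ τ in (0:ℝ)..t, B * g (t - τ)) = B * ∫ τ in (0:ℝ)..t, g (t - τ) :=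
      intervalIntegral.integral_const_mul B _
    have h3 := mul_le_mul_of_nonneg_left (hkt t ht) hB0
    have := hgG t ht
    have := h1.trans (h2.le.trans h3)
    linarith [this]
  have hBle : B ≤ G + k * B := csInf_le hSbdd hstep
  have hfin : B ≤ (1 / (1 - k)) * G := by
    rw [div_mul_eq_mul_div, le_div_iff₀ (by linarith)]
    nlinarith
  filter_upwards [hBmem] with t ht h0
  exact (ht h0).trans hfin
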